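/- arXiv:1103.3793 — 5 statements merged into one kernel-verified Lean document; each statement's English description precedes it below -/
import Mathlib

section
/- Let L be a Lindblad generator on M_d(ℂ) built from a Hermitian H and Kraus operators {h_α}, and let L^T be its dual generator, L^T[X] = i[H,X] + Σ_α (h_α† X h_α − (1/2){h_α† h_α, X}). If there exists an invertible (full-rank) density matrix ρ* with L[ρ*] = 0, then the fixed-point set M_γ = {X ∈ M_d(ℂ) : L^T[X] = 0} is a unital *-subalgebra of M_d(ℂ): it contains the identity matrix and is closed under sums, scalar multiples, adjoints, and matrix products. -/
open Matrix Filter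
open scoped ComplexOrder

variable {d : ℕ}

/-- The Lindblad generator built from `H` and Kraus operators `h`. -/
noncomputable def lindbladOf (H : Matrix (Fin d) (Fin d) ℂ) {n : ℕ}
    (h : Fin n → Matrix (Fin d) (Fin d) ℂ) :
    Matrix (Fin d) (Fin d) ℂ →ₗ[ℂ] Matrix (Fin d) (Fin d) ℂ :=
  (-Complex.I) • (LinearMap.mulLeft ℂ H - LinearMap.mulRight ℂ H) +
    ∑ α, ((LinearMap.mulLeft ℂ (h α)).comp (LinearMap.mulRight ℂ (h α)ᴴ)
      - ((1 : ℂ)/2) • (LinearMap.mulLeft ℂ ((h α)ᴴ * h α) + LinearMap.mulRight ℂ ((h α)ᴴ * h α)))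

/-- The dual (Heisenberg picture) Lindblad generator built from `H` and Kraus operators `h`. -/
noncomputable def lindbladDualOf (H : Matrix (Fin d) (Fin d) ℂ) {n : ℕ}
    (h : Fin n → Matrix (Fin d) (Fin d) ℂ) :
    Matrix (Fin d) (Fin d) ℂ →ₗ[ℂ] Matrix (Fin d) (Fin d) ℂ :=
  Complex.I • (LinearMap.mulLeft ℂ H - LinearMap.mulRight ℂ H) +
    ∑ α, ((LinearMap.mulLeft ℂ (h α)ᴴ).comp (LinearMap.mulRight ℂ (h α))
      - ((1 : ℂ)/2) • (LinearMap.mulLeft ℂ ((h α)ᴴ * h α) + LinearMap.mulRight ℂ ((h α)ᴴ * h α)))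

open Finset

section helpers
variable (H : Matrix (Fin d) (Fin d) ℂ) {n : ℕ} (h : Fin n → Matrix (Fin d) (Fin d) ℂ)

lemma lindbladOf_apply (ρ : Matrix (Fin d) (Fin d) ℂ) :
    lindbladOf H h ρ = (-Complex.I) • (H * ρ - ρ * H) +
      ∑ α, (h α * ρ * (h α)ᴴ
        - ((1:ℂ)/2) • ((h α)ᴴ * h α * ρ + ρ * ((h α)ᴴ * h α))) := by
  simp [lindbladOf, LinearMap.sum_apply, mul_assoc]

lemma lindbladDualOf_apply (X : Matrix (Fin d) (Fin d) ℂ) :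
    lindbladDualOf H h X = Complex.I • (H * X - X * H) +
      ∑ α, ((h α)ᴴ * X * h α
        - ((1:ℂ)/2) • ((h α)ᴴ * h α * X + X * ((h α)ᴴ * h α))) := by
  simp [lindbladDualOf, LinearMap.sum_apply, mul_assoc]
end helpers
variable {d : ℕ}

lemma key_tr {m : ℕ} (A ρ B Z : Matrix (Fin m) (Fin m) ℂ) :
    (A * ρ * B * Z).trace = (ρ * (B * (Z * A))).trace := by
  simp only [mul_assoc]
  rw [trace_mul_comm]
  simp only [mul_assoc]

lemma key_tr2 {m : ℕ} (A ρ Z : Matrix (Fin m) (Fin m) ℂ) :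
    (A * ρ * Z).trace = (ρ * (Z * A)).trace := by
  simp only [mul_assoc]
  rw [trace_mul_comm]
  simp only [mul_assoc]

lemma diss_per {m : ℕ} (g X Y : Matrix (Fin m) (Fin m) ℂ) :
    gᴴ*(Xᴴ*Y)*g - ((1:ℂ)/2)•(gᴴ*g*(Xᴴ*Y) + (Xᴴ*Y)*(gᴴ*g))
      = Xᴴ*(gᴴ*Y*g - ((1:ℂ)/2)•(gᴴ*g*Y + Y*(gᴴ*g)))
        + (gᴴ*Xᴴ*g - ((1:ℂ)/2)•(gᴴ*g*Xᴴ + Xᴴ*(gᴴ*g)))*Y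
        + (g*X - X*g)ᴴ*(g*Y - Y*g) := by
  simp only [conjTranspose_sub, conjTranspose_mul, sub_mul, mul_sub, mul_add, add_mul,
    mul_smul_comm, smul_mul_assoc, smul_add, smul_sub, mul_assoc]
  module

lemma trace_mul_conjTranspose_self' {m : ℕ} (A : Matrix (Fin m) (Fin m) ℂ) :
    (A * Aᴴ).trace = ((∑ i, ∑ j, Complex.normSq (A i j) : ℝ) : ℂ) := by
  push_cast
  simp [Matrix.trace, Matrix.diag, mul_apply, conjTranspose_apply, Complex.mul_conj]

lemma tr_self_nonneg {m : ℕ} (A : Matrix (Fin m) (Fin m) ℂ) : 0 ≤ (A * Aᴴ).trace := by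
  rw [trace_mul_conjTranspose_self']
  rw [Complex.zero_le_real]
  exact Finset.sum_nonneg fun i _ => Finset.sum_nonneg fun j _ => Complex.normSq_nonneg _

lemma tr_self_eq_zero {m : ℕ} {A : Matrix (Fin m) (Fin m) ℂ}
    (hA : (A * Aᴴ).trace = 0) : A = 0 := by
  rw [trace_mul_conjTranspose_self'] at hA
  norm_cast at hA
  ext i j
  have h1 := (Finset.sum_eq_zero_iff_of_nonneg
    (fun i _ => Finset.sum_nonneg fun j _ => Complex.normSq_nonneg _)).mp hA i (mem_univ _)
  have h2 := (Finset.sum_eq_zero_iff_of_nonneg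
    (fun j _ => Complex.normSq_nonneg _)).mp h1 j (mem_univ _)
  simpa using Complex.normSq_eq_zero.mp h2

section main
variable (H : Matrix (Fin d) (Fin d) ℂ) {n : ℕ} (h : Fin n → Matrix (Fin d) (Fin d) ℂ)

lemma trace_duality (ρ Z : Matrix (Fin d) (Fin d) ℂ) :
    (lindbladOf H h ρ * Z).trace = (ρ * lindbladDualOf H h Z).trace := by
  rw [lindbladOf_apply, lindbladDualOf_apply, add_mul, mul_add, trace_add, trace_add]
  congr 1
  · rw [smul_mul_assoc, mul_smul_comm, trace_smul, trace_smul, sub_mul, mul_sub,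
      trace_sub, trace_sub, key_tr2 H ρ Z]
    rw [show (ρ * H * Z).trace = (ρ * (H * Z)).trace by simp only [mul_assoc]]
    rw [show (ρ * (Z * H)).trace = (ρ * (Z * H)).trace from rfl]
    simp only [smul_eq_mul]
    ring
  · rw [Finset.sum_mul, Finset.mul_sum, trace_sum, trace_sum]
    refine Finset.sum_congr rfl fun α _ => ?_
    rw [sub_mul, mul_sub, trace_sub, trace_sub, smul_mul_assoc, mul_smul_comm,
      trace_smul, trace_smul, add_mul, mul_add, trace_add, trace_add,
      key_tr (h α) ρ (h α)ᴴ Z, key_tr2 ((h α)ᴴ * h α) ρ Z]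
    rw [show (ρ * ((h α)ᴴ * h α) * Z).trace = (ρ * ((h α)ᴴ * h α * Z)).trace by
      simp only [mul_assoc]]
    rw [show (ρ * ((h α)ᴴ * Z * h α)).trace = (ρ * ((h α)ᴴ * (Z * h α))).trace by
      simp only [mul_assoc]]
    simp only [smul_eq_mul, mul_assoc]
    ring

lemma dual_one : lindbladDualOf H h (1 : Matrix (Fin d) (Fin d) ℂ) = 0 := by
  rw [lindbladDualOf_apply]
  simp only [mul_one, one_mul, sub_self, smul_zero, zero_add]
  exact Finset.sum_eq_zero fun α _ => by module

variable {H} in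
lemma dual_conjTranspose (hH : H.IsHermitian) (X : Matrix (Fin d) (Fin d) ℂ) :
    lindbladDualOf H h Xᴴ = (lindbladDualOf H h X)ᴴ := by
  rw [lindbladDualOf_apply, lindbladDualOf_apply, conjTranspose_add, conjTranspose_sum]
  congr 1
  · simp only [conjTranspose_smul, conjTranspose_sub, conjTranspose_mul, hH.eq,
      Complex.star_def, Complex.conj_I]
    module
  · refine Finset.sum_congr rfl fun α _ => ?_
    simp only [conjTranspose_sub, conjTranspose_smul, conjTranspose_add, conjTranspose_mul,
      conjTranspose_conjTranspose, Complex.star_def, map_div₀, _root_.map_one, Complex.conj_ofNat,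
      mul_assoc]
    module

lemma diss_identity (X Y : Matrix (Fin d) (Fin d) ℂ) :
    lindbladDualOf H h (Xᴴ * Y) = Xᴴ * lindbladDualOf H h Y + lindbladDualOf H h Xᴴ * Y
      + ∑ α, (h α * X - X * h α)ᴴ * (h α * Y - Y * h α) := by
  rw [lindbladDualOf_apply, lindbladDualOf_apply, lindbladDualOf_apply]
  rw [mul_add, add_mul, Finset.mul_sum, Finset.sum_mul]
  have hham : Complex.I • (H * (Xᴴ * Y) - (Xᴴ * Y) * H)
      = Xᴴ * (Complex.I • (H * Y - Y * H)) + (Complex.I • (H * Xᴴ - Xᴴ * H)) * Y := by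
    simp only [mul_sub, sub_mul, mul_smul_comm, smul_mul_assoc, smul_sub, mul_assoc]
    module
  rw [hham, show (∑ α, ((h α)ᴴ * (Xᴴ * Y) * h α
      - ((1:ℂ)/2) • ((h α)ᴴ * h α * (Xᴴ * Y) + (Xᴴ * Y) * ((h α)ᴴ * h α))))
    = ∑ α, (Xᴴ * ((h α)ᴴ * Y * h α - ((1:ℂ)/2) • ((h α)ᴴ * h α * Y + Y * ((h α)ᴴ * h α)))
        + ((h α)ᴴ * Xᴴ * h α - ((1:ℂ)/2) • ((h α)ᴴ * h α * Xᴴ + Xᴴ * ((h α)ᴴ * h α))) * Y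
        + (h α * X - X * h α)ᴴ * (h α * Y - Y * h α)) from
    Finset.sum_congr rfl fun α _ => diss_per (h α) X Y]
  simp only [Finset.sum_add_distrib]
  abel
end main

variable (H : Matrix (Fin d) (Fin d) ℂ) {n : ℕ} (h : Fin n → Matrix (Fin d) (Fin d) ℂ)

open scoped MatrixOrder in
variable {H h} in
lemma comm_zero (hH : H.IsHermitian) {ρ : Matrix (Fin d) (Fin d) ℂ} (hρd : ρ.PosDef)
    (hstat : lindbladOf H h ρ = 0) {X : Matrix (Fin d) (Fin d) ℂ}
    (hX : lindbladDualOf H h X = 0) (α : Fin n) : h α * X - X * h α = 0 := by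
  have hXd : lindbladDualOf H h Xᴴ = 0 := by
    rw [dual_conjTranspose h hH, hX, conjTranspose_zero]
  have key : lindbladDualOf H h (Xᴴ * X)
      = ∑ β, (h β * X - X * h β)ᴴ * (h β * X - X * h β) := by
    rw [diss_identity, hX, hXd, mul_zero, zero_mul, zero_add, zero_add]
  have h0 : (ρ * lindbladDualOf H h (Xᴴ * X)).trace = 0 := by
    rw [← trace_duality, hstat, zero_mul, trace_zero]
  set s := CFC.sqrt ρ with hs_def
  have hs : s * s = ρ := CFC.sqrt_mul_sqrt_self ρ hρd.posSemidef.nonneg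
  have hsH : sᴴ = s := (CFC.sqrt_nonneg ρ).posSemidef.1
  rw [key, Finset.mul_sum, trace_sum] at h0
  have hterm : ∀ β : Fin n, (ρ * ((h β * X - X * h β)ᴴ * (h β * X - X * h β))).trace
      = (((h β * X - X * h β) * s) * ((h β * X - X * h β) * s)ᴴ).trace := by
    intro β
    set C := h β * X - X * h β
    have : C * s * (C * s)ᴴ = C * ρ * Cᴴ := by
      rw [conjTranspose_mul, hsH, ← hs]
      simp only [mul_assoc]
    rw [this, trace_mul_cycle, trace_mul_comm]
  rw [Finset.sum_congr rfl fun β _ => hterm β] at h0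
  have hz := (Finset.sum_eq_zero_iff_of_nonneg
    (fun β _ => tr_self_nonneg _)).mp h0 α (Finset.mem_univ _)
  have hCs : (h α * X - X * h α) * s = 0 := tr_self_eq_zero hz
  have hCρ : (h α * X - X * h α) * ρ = 0 := by
    rw [← hs, ← mul_assoc, hCs, zero_mul]
  have := hρd.isUnit
  calc h α * X - X * h α = (h α * X - X * h α) * ρ * ρ⁻¹ := by
        rw [mul_assoc, Matrix.mul_nonsing_inv _ (hρd.isUnit.map (Matrix.detMonoidHom)), mul_one]
      _ = 0 := by rw [hCρ, zero_mul]

theorem stmt2 (d : ℕ) (hd : 1 ≤ d)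
    (H : Matrix (Fin d) (Fin d) ℂ) (hH : H.IsHermitian)
    {n : ℕ} (h : Fin n → Matrix (Fin d) (Fin d) ℂ)
    (hρ : ∃ ρstar : Matrix (Fin d) (Fin d) ℂ,
      ρstar.PosDef ∧ ρstar.trace = 1 ∧ lindbladOf H h ρstar = 0) :
    lindbladDualOf H h 1 = 0 ∧
    (∀ X Y : Matrix (Fin d) (Fin d) ℂ, lindbladDualOf H h X = 0 → lindbladDualOf H h Y = 0 →
      lindbladDualOf H h (X + Y) = 0) ∧
    (∀ (c : ℂ) (X : Matrix (Fin d) (Fin d) ℂ), lindbladDualOf H h X = 0 →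
      lindbladDualOf H h (c • X) = 0) ∧
    (∀ X : Matrix (Fin d) (Fin d) ℂ, lindbladDualOf H h X = 0 →
      lindbladDualOf H h Xᴴ = 0) ∧
    (∀ X Y : Matrix (Fin d) (Fin d) ℂ, lindbladDualOf H h X = 0 → lindbladDualOf H h Y = 0 →
      lindbladDualOf H h (X * Y) = 0) := by
  obtain ⟨ρstar, hρd, -, hstat⟩ := hρ
  refine ⟨dual_one H h, ?_, ?_, ?_, ?_⟩
  · intro X Y hX hY; rw [map_add, hX, hY, add_zero]
  · intro c X hX; rw [_root_.map_smul, hX, smul_zero]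
  · intro X hX; rw [dual_conjTranspose h hH, hX, conjTranspose_zero]
  · intro X Y hX hY
    have hXd : lindbladDualOf H h Xᴴ = 0 := by
      rw [dual_conjTranspose h hH, hX, conjTranspose_zero]
    have hid := diss_identity H h Xᴴ Y
    rw [conjTranspose_conjTranspose] at hid
    rw [hid, hY, hX, mul_zero, zero_mul, zero_add, zero_add]
    exact Finset.sum_eq_zero fun α _ => by
      rw [comm_zero hH hρd hstat hY α, mul_zero]
end

section
/- Let Φ : M_d(ℂ) → M_d(ℂ) be a linear map that is trace-preserving (Tr(Φ[X]) = Tr(X) for all X) and positive (Φ[A] is positive semidefinite whenever A is positive semidefinite). If X ∈ M_d(ℂ) is Hermitian and Φ[X] = X, then Φ[X₊] = X₊ and Φ[X₋] = X₋, where X = X₊ − X₋ is the spectral decomposition of X into its positive part X₊ and negative part X₋ (both positive semidefinite with X₊X₋ = 0). -/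
open Matrix
open scoped ComplexOrder

private lemma diag_nonneg {d : ℕ} {A : Matrix (Fin d) (Fin d) ℂ} (hA : A.PosSemidef)
    (i : Fin d) : 0 ≤ A i i := by
  exact hA.diag_nonneg

private lemma psd_trace_nonneg {d : ℕ} {A : Matrix (Fin d) (Fin d) ℂ} (hA : A.PosSemidef) :
    0 ≤ A.trace := by
  exact Finset.sum_nonneg fun i _ => diag_nonneg hA i

open scoped MatrixOrder in
private lemma psd_trace_eq_zero {d : ℕ} {A : Matrix (Fin d) (Fin d) ℂ} (hA : A.PosSemidef)
    (h : A.trace = 0) : A = 0 := by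
  set S := CFC.sqrt A with hSdef
  have hSH : Sᴴ = S := (CFC.sqrt_nonneg A).posSemidef.isHermitian.eq
  have hSS : S * S = A := CFC.sqrt_mul_sqrt_self A hA.nonneg
  have htr : A.trace = ∑ j : Fin d, ∑ i : Fin d, ((Complex.normSq (S i j) : ℝ) : ℂ) := by
    rw [← hSS, Matrix.trace]
    congr 1
    ext j
    simp only [Matrix.diag_apply, Matrix.mul_apply]
    congr 1
    ext i
    have : S j i = star (S i j) := by
      conv_lhs => rw [← hSH]
      rfl
    rw [this, Complex.star_def, Complex.normSq_eq_conj_mul_self]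
  have hsum : ∑ j : Fin d, ∑ i : Fin d, Complex.normSq (S i j) = 0 := by
    have := htr.symm.trans h
    have := congrArg Complex.re this
    simpa using this
  have hzero : S = 0 := by
    ext i j
    have h1 : ∀ j ∈ Finset.univ, (0:ℝ) ≤ ∑ i : Fin d, Complex.normSq (S i j) :=
      fun j _ => Finset.sum_nonneg fun i _ => Complex.normSq_nonneg _
    have h2 := (Finset.sum_eq_zero_iff_of_nonneg h1).mp hsum j (Finset.mem_univ j)
    have h3 : ∀ i ∈ Finset.univ, (0:ℝ) ≤ Complex.normSq (S i j) :=
      fun i _ => Complex.normSq_nonneg _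
    have h4 := (Finset.sum_eq_zero_iff_of_nonneg h3).mp h2 i (Finset.mem_univ i)
    simpa using Complex.normSq_eq_zero.mp h4
  rw [← hSS, hzero, mul_zero]

open scoped MatrixOrder in
private lemma psd_compress_zero {d : ℕ} {A B : Matrix (Fin d) (Fin d) ℂ} (hA : A.PosSemidef)
    (h : Bᴴ * A * B = 0) : A * B = 0 := by
  set S := CFC.sqrt A with hSdef
  have hSH : Sᴴ = S := (CFC.sqrt_nonneg A).posSemidef.isHermitian.eq
  have hSS : S * S = A := CFC.sqrt_mul_sqrt_self A hA.nonneg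
  have key : (S * B)ᴴ * (S * B) = 0 := by
    rw [Matrix.conjTranspose_mul, hSH]
    calc Bᴴ * S * (S * B) = Bᴴ * (S * S) * B := by noncomm_ring
    _ = 0 := by rw [hSS, h]
  have hSB : S * B = 0 := Matrix.conjTranspose_mul_self_eq_zero.mp key
  calc A * B = S * (S * B) := by rw [← hSS, mul_assoc]
  _ = 0 := by rw [hSB, mul_zero]

theorem stmt6 (d : ℕ) (hd : 1 ≤ d)
    (Φ : Matrix (Fin d) (Fin d) ℂ →ₗ[ℂ] Matrix (Fin d) (Fin d) ℂ)
    (htrace : ∀ X : Matrix (Fin d) (Fin d) ℂ, (Φ X).trace = X.trace)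
    (hpos : ∀ A : Matrix (Fin d) (Fin d) ℂ, A.PosSemidef → (Φ A).PosSemidef)
    (X : Matrix (Fin d) (Fin d) ℂ) (hX : X.IsHermitian) (hfix : Φ X = X)
    (Xp Xm : Matrix (Fin d) (Fin d) ℂ) (hXp : Xp.PosSemidef) (hXm : Xm.PosSemidef)
    (hdecomp : X = Xp - Xm) (horth : Xp * Xm = 0) :
    Φ Xp = Xp ∧ Φ Xm = Xm := by
  classical
  -- spectral data of Xm
  set U : Matrix (Fin d) (Fin d) ℂ := (hXm.1.eigenvectorUnitary : Matrix (Fin d) (Fin d) ℂ)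
    with hUdef
  set μ : Fin d → ℝ := hXm.1.eigenvalues with hμdef
  have hUU : star U * U = 1 := Matrix.mem_unitaryGroup_iff'.mp hXm.1.eigenvectorUnitary.2
  have hspec : Xm = U * Matrix.diagonal (RCLike.ofReal ∘ μ) * star U := hXm.1.spectral_theorem
  set D : Matrix (Fin d) (Fin d) ℂ := Matrix.diagonal (RCLike.ofReal ∘ μ) with hDdef
  set e : Fin d → ℂ := fun i => if μ i = 0 then 0 else 1 with hedef
  set g : Fin d → ℂ := fun i => if μ i = 0 then 0 else ((μ i : ℂ))⁻¹ with hgdef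
  set Z : Matrix (Fin d) (Fin d) ℂ := U * Matrix.diagonal g * star U with hZdef
  set P : Matrix (Fin d) (Fin d) ℂ := Xm * Z with hPdef
  have sandwich : ∀ a b : Fin d → ℂ,
      (U * Matrix.diagonal a * star U) * (U * Matrix.diagonal b * star U)
        = U * Matrix.diagonal (fun i => a i * b i) * star U := by
    intro a b
    calc (U * Matrix.diagonal a * star U) * (U * Matrix.diagonal b * star U)
        = U * (Matrix.diagonal a * ((star U * U) * Matrix.diagonal b)) * star U := by
          noncomm_ring
      _ = U * Matrix.diagonal (fun i => a i * b i) * star U := by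
          rw [hUU, one_mul, Matrix.diagonal_mul_diagonal]
  have hfun1 : (fun i => (RCLike.ofReal ∘ μ) i * g i) = e := by
    funext i
    simp only [Function.comp_apply, hgdef, hedef]
    by_cases h : μ i = 0
    · simp [h]
    · have hne : ((μ i : ℝ) : ℂ) ≠ 0 := by exact_mod_cast h
      simp only [if_neg h]
      exact mul_inv_cancel₀ hne
  have hPE : P = U * Matrix.diagonal e * star U := by
    rw [hPdef, hspec, hZdef, sandwich, hfun1]
  have he : star e = e := by
    funext i
    simp only [Pi.star_apply, hedef]
    by_cases h : μ i = 0 <;> simp [h]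
  have hPH : Pᴴ = P := by
    rw [hPE]
    rw [Matrix.conjTranspose_mul, Matrix.conjTranspose_mul, Matrix.diagonal_conjTranspose, he]
    rw [← Matrix.star_eq_conjTranspose U, ← Matrix.star_eq_conjTranspose (star U), star_star]
    noncomm_ring
  have hfun2 : (fun i => e i * (RCLike.ofReal ∘ μ) i) = RCLike.ofReal ∘ μ := by
    funext i
    simp only [Function.comp_apply, hedef]
    by_cases h : μ i = 0 <;> simp [h]
  have hPXm : P * Xm = Xm := by
    conv_lhs => rw [hPE, hspec, sandwich, hfun2]
    exact hspec.symm
  have hXmP : Xm * P = Xm := by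
    have := congrArg Matrix.conjTranspose hPXm
    rwa [Matrix.conjTranspose_mul, hPH, hXm.1.eq] at this
  have hXpP : Xp * P = 0 := by
    rw [hPdef, ← mul_assoc, horth, zero_mul]
  have hPXp : P * Xp = 0 := by
    have := congrArg Matrix.conjTranspose hXpP
    rwa [Matrix.conjTranspose_mul, hPH, hXp.1.eq, Matrix.conjTranspose_zero] at this
  have hfun3 : (fun i => e i * e i) = e := by
    funext i
    simp only [hedef]
    by_cases h : μ i = 0 <;> simp [h]
  have hPP : P * P = P := by
    conv_lhs => rw [hPE, sandwich, hfun3]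
    exact hPE.symm
  -- the complement
  set Q : Matrix (Fin d) (Fin d) ℂ := 1 - P with hQdef
  have hQH : Qᴴ = Q := by
    rw [hQdef, Matrix.conjTranspose_sub, hPH, Matrix.conjTranspose_one]
  have hQP : Q * P = 0 := by rw [hQdef, sub_mul, one_mul, hPP, sub_self]
  have hPQ : P * Q = 0 := by rw [hQdef, mul_sub, mul_one, hPP, sub_self]
  -- trace splitting
  have hsplit : ∀ A : Matrix (Fin d) (Fin d) ℂ,
      A.trace = (P * A * P).trace + (Q * A * Q).trace := by
    intro A
    have h1 : A = P * A * P + P * A * Q + Q * A * P + Q * A * Q := by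
      have : P + Q = 1 := by rw [hQdef]; abel
      calc A = (P + Q) * A * (P + Q) := by rw [this, one_mul, mul_one]
        _ = P * A * P + P * A * Q + Q * A * P + Q * A * Q := by noncomm_ring
    have h2 : (P * A * Q).trace = 0 := by
      rw [Matrix.trace_mul_comm, ← mul_assoc, hQP, zero_mul, Matrix.trace_zero]
    have h3 : (Q * A * P).trace = 0 := by
      rw [Matrix.trace_mul_comm, ← mul_assoc, hPQ, zero_mul, Matrix.trace_zero]
    conv_lhs => rw [h1]
    rw [Matrix.trace_add, Matrix.trace_add, Matrix.trace_add, h2, h3]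
    ring
  -- the fixed-point difference
  have hΦp := hpos Xp hXp
  have hΦm := hpos Xm hXm
  have hYeq : Φ Xp - Xp = Φ Xm - Xm := by
    have h1 : Φ Xp - Φ Xm = Xp - Xm := by
      rw [← map_sub, ← hdecomp, hfix, hdecomp]
    rw [sub_eq_sub_iff_sub_eq_sub] at h1
    exact h1
  -- positivity of compressions
  have hA1 : (P * Φ Xp * P).PosSemidef := by
    have := hΦp.conjTranspose_mul_mul_same P
    rwa [hPH] at this
  have hB1 : (Q * Φ Xm * Q).PosSemidef := by
    have := hΦm.conjTranspose_mul_mul_same Q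
    rwa [hQH] at this
  -- the trace computation
  have hPΦmP : P * Φ Xm * P = Xm + P * Φ Xp * P := by
    have h1 : Φ Xm = Xm + (Φ Xp - Xp) := by rw [hYeq]; abel
    rw [h1]
    have e1 : P * (Xm + (Φ Xp - Xp)) * P
        = P * Xm * P + P * (Φ Xp) * P - P * Xp * P := by noncomm_ring
    have e2 : P * Xp * P = 0 := by rw [hPXp, zero_mul]
    rw [e1, e2, hPXm, hXmP, sub_zero]
  have hab : (P * Φ Xp * P).trace + (Q * Φ Xm * Q).trace = 0 := by
    have h1 := hsplit (Φ Xm)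
    rw [htrace Xm, hPΦmP, Matrix.trace_add] at h1
    -- Xm.trace = Xm.trace + a + b
    have := h1
    linear_combination -this
  have ha0 : (P * Φ Xp * P).trace = 0 := by
    have ha := psd_trace_nonneg hA1
    have hb := psd_trace_nonneg hB1
    have h1 : (P * Φ Xp * P).trace ≤ 0 := by
      have : (P * Φ Xp * P).trace = -(Q * Φ Xm * Q).trace := by linear_combination hab
      rw [this]
      exact neg_nonpos.mpr hb
    exact le_antisymm h1 ha
  have hb0 : (Q * Φ Xm * Q).trace = 0 := by linear_combination hab - ha0
  -- conclude compressions vanish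
  have hPΦpP : P * Φ Xp * P = 0 := psd_trace_eq_zero hA1 ha0
  have hQΦmQ : Q * Φ Xm * Q = 0 := psd_trace_eq_zero hB1 hb0
  have hΦmQ : Φ Xm * Q = 0 := by
    apply psd_compress_zero hΦm
    rwa [hQH]
  have hΦmP : Φ Xm * P = Φ Xm := by
    have : Φ Xm * (1 - P) = 0 := by rw [← hQdef]; exact hΦmQ
    rw [mul_sub, mul_one, sub_eq_zero] at this
    exact this.symm
  have hPΦm : P * Φ Xm = Φ Xm := by
    have := congrArg Matrix.conjTranspose hΦmP
    rwa [Matrix.conjTranspose_mul, hPH, hΦm.1.eq] at this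
  -- sandwich the fixed-point equation with P
  have hmain : Φ Xm - Xm = 0 := by
    have h1 : P * (Φ Xp - Xp) * P = P * (Φ Xm - Xm) * P := by rw [hYeq]
    have h2 : P * (Φ Xp - Xp) * P = 0 := by
      have e1 : P * (Φ Xp - Xp) * P = P * Φ Xp * P - P * Xp * P := by noncomm_ring
      have e2 : P * Xp * P = 0 := by rw [hPXp, zero_mul]
      rw [e1, e2, hPΦpP, sub_zero]
    have h3 : P * (Φ Xm - Xm) * P = Φ Xm - Xm := by
      have : P * (Φ Xm - Xm) * P = P * Φ Xm * P - P * Xm * P := by noncomm_ring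
      rw [this, hPXm, hXmP, hPΦm, hΦmP]
    rw [h2] at h1
    rw [← h3, ← h1]
  constructor
  · have := hYeq.trans hmain
    exact sub_eq_zero.mp this
  · exact sub_eq_zero.mp hmain
end

section
/- Let L₀ and L₁ be Lindblad generators on M_d(ℂ) and set L_ε = L₀ + εL₁. Fix n ≥ 1 and suppose there is a sequence ε_m > 0 with ε_m → 0 such that for every m the generator L_{ε_m} admits n stationary density matrices ρ₁(ε_m), …, ρ_n(ε_m) that are pairwise orthogonal in the Hilbert–Schmidt sense (Tr(ρ_j(ε_m)ρ_k(ε_m)) = 0 for j ≠ k). Then L₀ admits n pairwise orthogonal stationary density matrices; in particular, the maximal number of mutually orthogonal stationary density matrices of L_ε for small ε cannot exceed that of L₀. -/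
open Matrix Filter
open scoped ComplexOrder

variable {d : ℕ}

/-- `L` is a Lindblad generator. -/
def IsLindblad (L : Matrix (Fin d) (Fin d) ℂ →ₗ[ℂ] Matrix (Fin d) (Fin d) ℂ) : Prop :=
  ∃ (H : Matrix (Fin d) (Fin d) ℂ) (n : ℕ) (h : Fin n → Matrix (Fin d) (Fin d) ℂ),
    H.IsHermitian ∧ L = lindbladOf H h

/-- `ρ` is a stationary density matrix of `L`. -/
def IsStationaryState (L : Matrix (Fin d) (Fin d) ℂ →ₗ[ℂ] Matrix (Fin d) (Fin d) ℂ)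
    (ρ : Matrix (Fin d) (Fin d) ℂ) : Prop :=
  ρ.PosSemidef ∧ ρ.trace = 1 ∧ L ρ = 0

open scoped MatrixOrder Matrix.Norms.L2Operator in
lemma aux_entry_norm_le {d : ℕ} {A : Matrix (Fin d) (Fin d) ℂ} (hA : A.PosSemidef)
    (ht : A.trace = 1) (i j : Fin d) : ‖A i j‖ ≤ 1 := by
  obtain ⟨B, hB⟩ := CStarAlgebra.nonneg_iff_eq_star_mul_self.mp hA.nonneg
  rw [star_eq_conjTranspose] at hB
  subst hB
  set s : Fin d → ℝ := fun i => ∑ k, ‖B k i‖ ^ 2 with hs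
  have hdiag : ∀ i, (Bᴴ * B) i i = (s i : ℂ) := by
    intro i
    simp only [Matrix.mul_apply, Matrix.conjTranspose_apply, hs]
    push_cast
    refine Finset.sum_congr rfl fun k _ => ?_
    rw [Complex.star_def, ← Complex.normSq_eq_conj_mul_self, Complex.normSq_eq_norm_sq]
    simp
  have hsum : ∑ i, s i = 1 := by
    have : (Bᴴ * B).trace = ∑ i, (s i : ℂ) := by
      rw [Matrix.trace]
      exact Finset.sum_congr rfl fun i _ => hdiag i
    rw [ht] at this
    have := congrArg Complex.re this.symm
    simpa using this
  have hle : ∀ i, s i ≤ 1 := by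
    intro i
    rw [← hsum]
    exact Finset.single_le_sum (fun k _ => Finset.sum_nonneg fun a _ => sq_nonneg ‖B a k‖)
      (Finset.mem_univ i)
  calc ‖(Bᴴ * B) i j‖ ≤ ∑ k, ‖star (B k i) * B k j‖ := by
        rw [Matrix.mul_apply]
        simp only [Matrix.conjTranspose_apply]
        exact norm_sum_le _ _
    _ ≤ ∑ k, (‖B k i‖ ^ 2 + ‖B k j‖ ^ 2) / 2 := by
        refine Finset.sum_le_sum fun k _ => ?_
        rw [norm_mul, norm_star]
        nlinarith [norm_nonneg (B k i), norm_nonneg (B k j), sq_nonneg (‖B k i‖ - ‖B k j‖)]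
    _ = (s i + s j) / 2 := by rw [hs]; rw [← Finset.sum_div, Finset.sum_add_distrib]
    _ ≤ 1 := by linarith [hle i, hle j]


theorem stmt7 (d : ℕ) (hd : 1 ≤ d)
    (L₀ L₁ : Matrix (Fin d) (Fin d) ℂ →ₗ[ℂ] Matrix (Fin d) (Fin d) ℂ)
    (hL₀ : IsLindblad L₀) (hL₁ : IsLindblad L₁)
    (n : ℕ) (hn : 1 ≤ n) (ε : ℕ → ℝ) (hεpos : ∀ m, 0 < ε m)
    (hεlim : Filter.Tendsto ε Filter.atTop (nhds 0))
    (ρ : ℕ → Fin n → Matrix (Fin d) (Fin d) ℂ)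
    (hstat : ∀ m j, IsStationaryState (L₀ + (ε m : ℂ) • L₁) (ρ m j))
    (horth : ∀ m, ∀ j k, j ≠ k → ((ρ m j) * (ρ m k)).trace = 0) :
    ∃ σ : Fin n → Matrix (Fin d) (Fin d) ℂ,
      (∀ j, IsStationaryState L₀ (σ j)) ∧
      (∀ j k, j ≠ k → ((σ j) * (σ k)).trace = 0) := by
  classical
  haveI := Complex.orderClosedTopology
  haveI : FirstCountableTopology (Matrix (Fin d) (Fin d) ℂ) :=
    inferInstanceAs (FirstCountableTopology (Fin d → Fin d → ℂ))
  -- a compact set containing all density matrices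
  let K : Set (Matrix (Fin d) (Fin d) ℂ) :=
    Set.univ.pi fun _ : Fin d => Set.univ.pi fun _ : Fin d => Metric.closedBall (0 : ℂ) 1
  have hKc : IsCompact K :=
    isCompact_univ_pi fun _ => isCompact_univ_pi fun _ => isCompact_closedBall 0 1
  let T : Set (Fin n → Matrix (Fin d) (Fin d) ℂ) := Set.univ.pi fun _ : Fin n => K
  have hTc : IsCompact T := isCompact_univ_pi fun _ => hKc
  have hmem : ∀ m, ρ m ∈ T := by
    intro m
    refine Set.mem_univ_pi.mpr fun j => Set.mem_univ_pi.mpr fun i =>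
      Set.mem_univ_pi.mpr fun i' => ?_
    rw [Metric.mem_closedBall, dist_zero_right]
    exact aux_entry_norm_le (hstat m j).1 (hstat m j).2.1 i i'
  obtain ⟨σ, hσT, φ, hφ, hconv⟩ := hTc.tendsto_subseq hmem
  have hconvj : ∀ j, Tendsto (fun m => ρ (φ m) j) atTop (nhds (σ j)) :=
    fun j => tendsto_pi_nhds.mp hconv j
  have hεφ : Tendsto (fun m => ε (φ m)) atTop (nhds 0) := hεlim.comp hφ.tendsto_atTop
  have hL₀c : Continuous L₀ := L₀.continuous_of_finiteDimensional
  have hL₁c : Continuous L₁ := L₁.continuous_of_finiteDimensional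
  refine ⟨σ, fun j => ?_, fun j k hjk => ?_⟩
  · constructor
    · -- PosSemidef
      refine posSemidef_iff_dotProduct_mulVec.mpr ⟨?_, ?_⟩
      · -- Hermitian
        have hCT : Continuous (fun A : Matrix (Fin d) (Fin d) ℂ => Aᴴ) :=
          continuous_id.matrix_conjTranspose
        have h1 : Tendsto (fun m => (ρ (φ m) j)ᴴ) atTop (nhds (σ j)ᴴ) :=
          (hCT.tendsto _).comp (hconvj j)
        have h2 : (fun m => (ρ (φ m) j)ᴴ) = fun m => ρ (φ m) j :=
          funext fun m => (hstat (φ m) j).1.1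
        rw [h2] at h1
        exact tendsto_nhds_unique h1 (hconvj j)
      · -- quadratic form nonneg
        intro x
        have hf : Continuous (fun A : Matrix (Fin d) (Fin d) ℂ => star x ⬝ᵥ A.mulVec x) :=
          continuous_const.dotProduct (continuous_id.matrix_mulVec continuous_const)
        have hq : Tendsto (fun m => star x ⬝ᵥ (ρ (φ m) j).mulVec x) atTop
            (nhds (star x ⬝ᵥ (σ j).mulVec x)) := (hf.tendsto _).comp (hconvj j)
        exact ge_of_tendsto' hq fun m => (hstat (φ m) j).1.dotProduct_mulVec_nonneg x
    constructor
    · -- trace = 1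
      have htr : Continuous (fun A : Matrix (Fin d) (Fin d) ℂ => A.trace) :=
        continuous_id.matrix_trace
      have h1 : Tendsto (fun m => (ρ (φ m) j).trace) atTop (nhds (σ j).trace) :=
        (htr.tendsto _).comp (hconvj j)
      have h2 : (fun m => (ρ (φ m) j).trace) = fun _ => (1 : ℂ) :=
        funext fun m => (hstat (φ m) j).2.1
      rw [h2] at h1
      exact tendsto_nhds_unique h1 tendsto_const_nhds
    · -- L₀ (σ j) = 0
      have h1 : Tendsto (fun m => L₀ (ρ (φ m) j)) atTop (nhds (L₀ (σ j))) :=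
        (hL₀c.tendsto _).comp (hconvj j)
      have h2 : ∀ m, L₀ (ρ (φ m) j) = (-(ε (φ m) : ℂ)) • L₁ (ρ (φ m) j) := by
        intro m
        have := (hstat (φ m) j).2.2
        simp only [LinearMap.add_apply, LinearMap.smul_apply] at this
        rw [neg_smul]
        linear_combination (norm := module) this
      have h3 : Tendsto (fun m => (-(ε (φ m) : ℂ)) • L₁ (ρ (φ m) j)) atTop
          (nhds ((-(0 : ℝ) : ℂ) • L₁ (σ j))) := by
        refine Tendsto.smul ?_ ((hL₁c.tendsto _).comp (hconvj j))
        have : Tendsto (fun m => ((ε (φ m) : ℂ))) atTop (nhds ((0:ℝ) : ℂ)) :=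
          (Complex.continuous_ofReal.tendsto _).comp hεφ
        exact this.neg
      rw [show ((-(0:ℝ) : ℂ)) • L₁ (σ j) = 0 by simp] at h3
      have h4 : Tendsto (fun m => L₀ (ρ (φ m) j)) atTop (nhds 0) := by
        rw [funext h2]; exact h3
      exact tendsto_nhds_unique h1 h4
  · -- orthogonality
    have hf : Continuous (fun p : (Fin n → Matrix (Fin d) (Fin d) ℂ) => (p j * p k).trace) :=
      (((continuous_apply j).matrix_mul (continuous_apply k)).matrix_trace)
    have h1 : Tendsto (fun m => (ρ (φ m) j * ρ (φ m) k).trace) atTop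
        (nhds ((σ j * σ k).trace)) := (hf.tendsto _).comp hconv
    have h2 : (fun m => (ρ (φ m) j * ρ (φ m) k).trace) = fun _ => (0 : ℂ) :=
      funext fun m => horth (φ m) j k hjk
    rw [h2] at h1
    exact tendsto_nhds_unique h1 tendsto_const_nhds
end

section
/- Let H ∈ M_d(ℂ) be Hermitian with d distinct eigenvalues E₁, …, E_d and orthonormal eigenbasis |1⟩, …, |d⟩. Then for every X ∈ M_d(ℂ), the Cesàro averages (1/T)∫₀^T e^{−itH} X e^{itH} dt converge as T → ∞ to the pinching Σ_{j=1}^d ⟨j|X|j⟩ |j⟩⟨j| of X in the eigenbasis of H. -/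
open Matrix Filter

attribute [local instance] Matrix.frobeniusNormedAddCommGroup Matrix.frobeniusNormedSpace
  Matrix.frobeniusNormedRing Matrix.frobeniusNormedAlgebra

set_option maxHeartbeats 1000000

lemma cesaro (c : ℂ) (hre : c.re = 0) :
    Tendsto (fun T : ℝ => T⁻¹ • ∫ t in (0:ℝ)..T, Complex.exp (c * t)) atTop
      (nhds (if c = 0 then 1 else 0)) := by
  rcases eq_or_ne c 0 with h | h
  · rw [if_pos h]
    have hev : (fun T : ℝ => T⁻¹ • ∫ t in (0:ℝ)..T, Complex.exp (c * t))
        =ᶠ[atTop] fun _ => (1:ℂ) := by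
      filter_upwards [eventually_gt_atTop (0:ℝ)] with T hT
      simp only [h, zero_mul, Complex.exp_zero, intervalIntegral.integral_const, sub_zero,
        smul_smul, inv_mul_cancel₀ hT.ne', one_smul]
    exact (tendsto_congr' hev).mpr tendsto_const_nhds
  · rw [if_neg h]
    apply squeeze_zero_norm' (a := fun T : ℝ => T⁻¹ * (2 / ‖c‖))
    · filter_upwards [eventually_ge_atTop (1:ℝ)] with T hT
      have hT0 : (0:ℝ) < T := lt_of_lt_of_le one_pos hT
      rw [integral_exp_mul_complex h, norm_smul, norm_div]
      rw [Real.norm_eq_abs, abs_inv, abs_of_pos hT0]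
      gcongr
      have h1 : ‖Complex.exp (c * T)‖ = 1 := by
        rw [Complex.norm_exp]
        have : (c * (T:ℂ)).re = 0 := by
          simp [Complex.mul_re, hre]
        rw [this, Real.exp_zero]
      calc ‖Complex.exp (c * T) - Complex.exp (c * 0)‖
          ≤ ‖Complex.exp (c * T)‖ + ‖Complex.exp (c * 0)‖ := norm_sub_le _ _
        _ = 2 := by rw [h1]; norm_num
    · simpa using tendsto_inv_atTop_zero.mul_const (2 / ‖c‖)

theorem stmt11 (d : ℕ) (hd : 1 ≤ d)
    (H : Matrix (Fin d) (Fin d) ℂ) (hH : H.IsHermitian)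
    (E : Fin d → ℝ) (hdistinct : Function.Injective E)
    (v : Fin d → (Fin d → ℂ))
    (hON : ∀ j k, star (v j) ⬝ᵥ v k = if j = k then (1:ℂ) else 0)
    (heig : ∀ j, H *ᵥ v j = (E j : ℂ) • v j)
    (X : Matrix (Fin d) (Fin d) ℂ) :
    Tendsto (fun T : ℝ => T⁻¹ •
        ∫ t in (0:ℝ)..T,
          NormedSpace.exp ((-(Complex.I * t)) • H) * X *
            NormedSpace.exp ((Complex.I * t) • H))
      atTop
      (nhds (∑ j, (star (v j) ⬝ᵥ X *ᵥ v j) • vecMulVec (v j) (star (v j)))) := by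
  classical
  set U : Matrix (Fin d) (Fin d) ℂ := Matrix.of (fun i j => v j i) with hU
  have hUU : Uᴴ * U = 1 := by
    ext j k
    have := hON j k
    simpa [Matrix.mul_apply, Matrix.conjTranspose_apply, dotProduct, Matrix.one_apply, hU]
      using this
  have hUU' : U * Uᴴ = 1 := mul_eq_one_comm.mp hUU
  have hHU : H * U = U * Matrix.diagonal (fun j => (E j : ℂ)) := by
    ext i j
    rw [Matrix.mul_diagonal]
    have h := congrFun (heig j) i
    simp only [Matrix.mulVec, dotProduct, Pi.smul_apply, smul_eq_mul] at h
    simpa [Matrix.mul_apply, hU, mul_comm] using h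
  have hH_eq : H = U * Matrix.diagonal (fun j => (E j:ℂ)) * Uᴴ := by
    rw [← hHU, Matrix.mul_assoc, hUU', Matrix.mul_one]
  set Uu : (Matrix (Fin d) (Fin d) ℂ)ˣ := ⟨U, Uᴴ, hUU', hUU⟩ with hUu
  have hexp : ∀ s : ℂ, NormedSpace.exp (s • H)
      = U * Matrix.diagonal (fun j => Complex.exp (s * E j)) * Uᴴ := by
    intro s
    have h1 : s • H = U * Matrix.diagonal (fun j => s * (E j:ℂ)) * Uᴴ := by
      rw [hH_eq, ← Matrix.smul_mul, ← Matrix.mul_smul, ← Matrix.diagonal_smul]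
      rfl
    rw [h1]
    have h2 := Matrix.exp_units_conj Uu (Matrix.diagonal fun j => s * (E j:ℂ))
    have h3 : ((Uu⁻¹ : _ˣ) : Matrix (Fin d) (Fin d) ℂ) = Uᴴ := rfl
    rw [h3] at h2
    rw [show ((Uu : _ˣ) : Matrix (Fin d) (Fin d) ℂ) = U from rfl] at h2
    rw [h2, Matrix.exp_diagonal]
    congr 1
    rw [Pi.exp_def]
    congr 1
    ext j
    rw [Complex.exp_eq_exp_ℂ]
  set Y : Matrix (Fin d) (Fin d) ℂ := Uᴴ * X * U with hY
  set c : Fin d → Fin d → ℂ := fun j k => Complex.I * ((E k : ℂ) - (E j : ℂ)) with hc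
  set C : Fin d → Fin d → Matrix (Fin d) (Fin d) ℂ :=
    fun j k => U * Matrix.single j k (Y j k) * Uᴴ with hCdef
  -- integrand decomposition
  have hintegrand : ∀ t : ℝ,
      NormedSpace.exp ((-(Complex.I * t)) • H) * X * NormedSpace.exp ((Complex.I * t) • H)
        = ∑ j, ∑ k, Complex.exp (c j k * t) • C j k := by
    intro t
    rw [hexp, hexp]
    have hassoc :
        (U * Matrix.diagonal (fun j => Complex.exp ((-(Complex.I * t)) * E j)) * Uᴴ) * X *
          (U * Matrix.diagonal (fun j => Complex.exp ((Complex.I * t) * E j)) * Uᴴ)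
        = U * (Matrix.diagonal (fun j => Complex.exp ((-(Complex.I * t)) * E j)) * Y *
            Matrix.diagonal (fun j => Complex.exp ((Complex.I * t) * E j))) * Uᴴ := by
      rw [hY]; simp only [Matrix.mul_assoc]
    rw [hassoc]
    have hmid : Matrix.diagonal (fun j => Complex.exp ((-(Complex.I * t)) * E j)) * Y *
          Matrix.diagonal (fun j => Complex.exp ((Complex.I * t) * E j))
        = ∑ j, ∑ k, Complex.exp (c j k * t) • Matrix.single j k (Y j k) := by
      ext i l
      rw [Matrix.mul_diagonal, Matrix.diagonal_mul]
      rw [Matrix.sum_apply]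
      simp only [Matrix.sum_apply, Matrix.smul_apply, Matrix.single, Matrix.of_apply,
        smul_eq_mul, mul_ite, mul_zero, mul_one]
      rw [Finset.sum_comm]
      rw [Finset.sum_eq_single l]
      · rw [Finset.sum_eq_single i]
        · simp only [and_self, if_pos rfl]
          have hee : Complex.exp ((-(Complex.I * t)) * E i) * Complex.exp ((Complex.I * t) * E l)
              = Complex.exp (c i l * t) := by
            rw [← Complex.exp_add]
            congr 1
            rw [hc]
            ring
          simp only [if_true]
          linear_combination (Y i l) * hee
        · intro b _ hb
          rw [if_neg (by tauto)]
        · intro hb; exact absurd (Finset.mem_univ i) hb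
      · intro b _ hb
        rw [Finset.sum_eq_zero]
        intro a _
        rw [if_neg (by tauto)]
      · intro hb; exact absurd (Finset.mem_univ l) hb
    rw [hmid]
    simp only [Matrix.mul_sum, Matrix.sum_mul, Matrix.mul_smul, Matrix.smul_mul]
    rfl
  -- continuity / integrability
  have hcont : ∀ (z : ℂ) (M : Matrix (Fin d) (Fin d) ℂ),
      Continuous fun t : ℝ => Complex.exp (z * t) • M :=
    fun z M => ((Complex.continuous_exp.comp (continuous_const.mul
      Complex.continuous_ofReal)).smul continuous_const)
  have hInt : ∀ T : ℝ,
      (∫ t in (0:ℝ)..T,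
        NormedSpace.exp ((-(Complex.I * t)) • H) * X * NormedSpace.exp ((Complex.I * t) • H))
      = ∑ j, ∑ k, (∫ t in (0:ℝ)..T, Complex.exp (c j k * t)) • C j k := by
    intro T
    rw [intervalIntegral.integral_congr (g := fun t => ∑ j, ∑ k, Complex.exp (c j k * t) • C j k)
      (fun t _ => hintegrand t)]
    rw [intervalIntegral.integral_finset_sum]
    · refine Finset.sum_congr rfl fun j _ => ?_
      rw [intervalIntegral.integral_finset_sum]
      · exact Finset.sum_congr rfl fun k _ => intervalIntegral.integral_smul_const _ _
      · exact fun k _ => (hcont (c j k) (C j k)).intervalIntegrable _ _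
    · intro j _
      exact (continuous_finset_sum _ fun k _ => hcont (c j k) (C j k)).intervalIntegrable _ _
  -- rewrite the function
  have hfun : ∀ T : ℝ,
      (T⁻¹ • ∫ t in (0:ℝ)..T,
        NormedSpace.exp ((-(Complex.I * t)) • H) * X * NormedSpace.exp ((Complex.I * t) • H))
      = ∑ j, ∑ k, (T⁻¹ • ∫ t in (0:ℝ)..T, Complex.exp (c j k * t)) • C j k := by
    intro T
    rw [hInt T, Finset.smul_sum]
    refine Finset.sum_congr rfl fun j _ => ?_
    rw [Finset.smul_sum]
    exact Finset.sum_congr rfl fun k _ => (smul_assoc _ _ _).symm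
  -- the limit matrix
  have hre : ∀ j k, (c j k).re = 0 := by
    intro j k
    simp [hc, Complex.mul_re]
  have hc0 : ∀ j k, (c j k = 0) ↔ k = j := by
    intro j k
    rw [hc]
    simp only [mul_eq_zero, Complex.I_ne_zero, false_or, sub_eq_zero]
    constructor
    · intro h
      exact hdistinct (by exact_mod_cast h)
    · rintro rfl; rfl
  have htarget : (∑ j, (star (v j) ⬝ᵥ X *ᵥ v j) • vecMulVec (v j) (star (v j)))
      = ∑ j, ∑ k, (if c j k = 0 then (1:ℂ) else 0) • C j k := by
    refine Finset.sum_congr rfl fun j _ => ?_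
    rw [Finset.sum_eq_single j]
    · rw [if_pos ((hc0 j j).mpr rfl), one_smul]
      -- C j j = (star (v j) ⬝ᵥ X *ᵥ v j) • vecMulVec (v j) (star (v j))
      have hYjj : Y j j = star (v j) ⬝ᵥ X *ᵥ v j := by
        rw [hY]
        simp only [Matrix.mul_apply, Matrix.conjTranspose_apply, dotProduct, Matrix.mulVec,
          dotProduct, hU, Matrix.of_apply, Finset.sum_mul, Finset.mul_sum, Pi.star_apply]
        rw [Finset.sum_comm]
        refine Finset.sum_congr rfl fun a _ => Finset.sum_congr rfl fun b _ => by ring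
      rw [hCdef]
      ext i l
      simp only [Matrix.mul_apply, Matrix.single, Matrix.conjTranspose_apply,
        Matrix.of_apply, Matrix.smul_apply, vecMulVec_apply, smul_eq_mul, Pi.star_apply,
        mul_ite, ite_mul, zero_mul, mul_zero, ite_and, Finset.sum_ite_eq, Finset.sum_ite_eq',
        Finset.mem_univ, if_true]
      rw [hYjj, hU]
      simp only [Matrix.of_apply]
      ring
    · intro k _ hk
      rw [if_neg (fun h => hk ((hc0 j k).mp h)), zero_smul]
    · intro hj; exact absurd (Finset.mem_univ j) hj
  rw [show (fun T : ℝ => T⁻¹ • ∫ t in (0:ℝ)..T,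
      NormedSpace.exp ((-(Complex.I * t)) • H) * X * NormedSpace.exp ((Complex.I * t) • H))
      = fun T : ℝ => ∑ j, ∑ k, (T⁻¹ • ∫ t in (0:ℝ)..T, Complex.exp (c j k * t)) • C j k
      from funext hfun, htarget]
  exact tendsto_finset_sum _ fun j _ => tendsto_finset_sum _ fun k _ =>
    (cesaro (c j k) (hre j k)).smul_const (C j k)
end

section
/- Let {h_α} be a finite family in M_d(ℂ) and let j, k ∈ ℂ^d be unit vectors. Define η_{jk} = Σ_α ( ⟨j|h_α|j⟩ · conj(⟨k|h_α|k⟩) − (1/2)(⟨j|h_α†h_α|j⟩ + ⟨k|h_α†h_α|k⟩) ) (this equals ⟨j| D[|j⟩⟨k|] |k⟩ for the dissipator D[ρ] = Σ_α (h_α ρ h_α† − (1/2){h_α†h_α, ρ})). Then Re(η_{jk}) ≤ −(1/2) Σ_α |⟨j|h_α|j⟩ − ⟨k|h_α|k⟩|² ≤ 0. -/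
open Matrix

local notation "⟪" x ", " y "⟫" => @inner ℂ _ _ x y

lemma aux_cs {d : ℕ} (v w : Fin d → ℂ) (hv : star v ⬝ᵥ v = 1) :
    ‖star v ⬝ᵥ w‖ ^ 2 ≤ (star w ⬝ᵥ w).re := by
  have h1 : star v ⬝ᵥ w = ⟪(WithLp.equiv 2 _).symm v, (WithLp.equiv 2 _).symm w⟫ :=
    by rw [dotProduct_comm]; rfl
  have h2 : star w ⬝ᵥ w = ⟪(WithLp.equiv 2 _).symm w, (WithLp.equiv 2 _).symm w⟫ :=
    by rw [dotProduct_comm]; rfl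
  have hnv : ‖(WithLp.equiv 2 (Fin d → ℂ)).symm v‖ = 1 := by
    have h3 : star v ⬝ᵥ v = ⟪(WithLp.equiv 2 _).symm v, (WithLp.equiv 2 _).symm v⟫ :=
      by rw [dotProduct_comm]; rfl
    rw [hv] at h3
    have : ‖(WithLp.equiv 2 (Fin d → ℂ)).symm v‖ ^ 2 = 1 := by
      have h4 := @inner_self_eq_norm_sq ℂ _ _ _ _ ((WithLp.equiv 2 (Fin d → ℂ)).symm v)
      rw [← h3] at h4
      simpa using h4.symm
    nlinarith [norm_nonneg ((WithLp.equiv 2 (Fin d → ℂ)).symm v)]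
  calc ‖star v ⬝ᵥ w‖ ^ 2
      = ‖⟪(WithLp.equiv 2 (Fin d → ℂ)).symm v, (WithLp.equiv 2 _).symm w⟫‖ ^ 2 := by
        rw [h1]
    _ ≤ (‖(WithLp.equiv 2 (Fin d → ℂ)).symm v‖ * ‖(WithLp.equiv 2 (Fin d → ℂ)).symm w‖) ^ 2 := by
        gcongr; exact norm_inner_le_norm _ _
    _ = ‖(WithLp.equiv 2 (Fin d → ℂ)).symm w‖ ^ 2 := by rw [hnv]; ring
    _ = (star w ⬝ᵥ w).re := by
        rw [h2, ← @inner_self_eq_norm_sq ℂ]; rfl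

theorem stmt14 (d : ℕ) (hd : 1 ≤ d)
    {n : ℕ} (h : Fin n → Matrix (Fin d) (Fin d) ℂ)
    (j k : Fin d → ℂ) (hj : star j ⬝ᵥ j = 1) (hk : star k ⬝ᵥ k = 1)
    (η : ℂ)
    (hη : η = ∑ α,
      ((star j ⬝ᵥ (h α) *ᵥ j) * (starRingEnd ℂ) (star k ⬝ᵥ (h α) *ᵥ k) -
        (1/2 : ℂ) * ((star j ⬝ᵥ ((h α)ᴴ * h α) *ᵥ j) + (star k ⬝ᵥ ((h α)ᴴ * h α) *ᵥ k)))) :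
    η.re ≤ -(1/2 : ℝ) * ∑ α, ‖(star j ⬝ᵥ (h α) *ᵥ j) - (star k ⬝ᵥ (h α) *ᵥ k)‖ ^ 2 ∧
    -(1/2 : ℝ) * ∑ α, ‖(star j ⬝ᵥ (h α) *ᵥ j) - (star k ⬝ᵥ (h α) *ᵥ k)‖ ^ 2 ≤ 0 := by
  constructor
  · subst hη
    rw [Complex.re_sum]
    rw [show -(1/2:ℝ) * ∑ α, ‖(star j ⬝ᵥ (h α) *ᵥ j) - (star k ⬝ᵥ (h α) *ᵥ k)‖ ^ 2 = ∑ α, -(1/2:ℝ) * ‖(star j ⬝ᵥ (h α) *ᵥ j) - (star k ⬝ᵥ (h α) *ᵥ k)‖ ^ 2 from Finset.mul_sum ..]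
    apply Finset.sum_le_sum
    intro α _
    set a := star j ⬝ᵥ (h α) *ᵥ j with ha
    set b := star k ⬝ᵥ (h α) *ᵥ k with hb
    have hA : ‖a‖ ^ 2 ≤ (star j ⬝ᵥ ((h α)ᴴ * h α) *ᵥ j).re := by
      have e : star j ⬝ᵥ ((h α)ᴴ * h α) *ᵥ j = star ((h α) *ᵥ j) ⬝ᵥ ((h α) *ᵥ j) := by
        rw [← Matrix.mulVec_mulVec, Matrix.dotProduct_mulVec, ← Matrix.star_mulVec]
      rw [e]; exact aux_cs j ((h α) *ᵥ j) hj
    have hB : ‖b‖ ^ 2 ≤ (star k ⬝ᵥ ((h α)ᴴ * h α) *ᵥ k).re := by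
      have e : star k ⬝ᵥ ((h α)ᴴ * h α) *ᵥ k = star ((h α) *ᵥ k) ⬝ᵥ ((h α) *ᵥ k) := by
        rw [← Matrix.mulVec_mulVec, Matrix.dotProduct_mulVec, ← Matrix.star_mulVec]
      rw [e]; exact aux_cs k ((h α) *ᵥ k) hk
    have habs : ∀ z : ℂ, ‖z‖ ^ 2 = z.re ^ 2 + z.im ^ 2 := by
      intro z; rw [Complex.sq_norm, Complex.normSq_apply]; ring
    rw [habs] at hA hB ⊢
    simp only [Complex.sub_re, Complex.sub_im, Complex.add_re, Complex.mul_re, Complex.mul_im,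
      Complex.conj_re, Complex.conj_im, Complex.ofReal_re, Complex.ofReal_im,
      Complex.div_re, Complex.div_im, Complex.one_re, Complex.one_im,
      Complex.re_ofNat, Complex.im_ofNat, Complex.normSq_ofNat] at *
    norm_num at *
    nlinarith [hA, hB]
  · have : (0:ℝ) ≤ ∑ α, ‖(star j ⬝ᵥ (h α) *ᵥ j) - (star k ⬝ᵥ (h α) *ᵥ k)‖ ^ 2 :=
      Finset.sum_nonneg fun α _ => by positivity
    nlinarith
end
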